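/- Suppose operators (on a Hilbert space, or formally in a *-algebra with a positivity notion) satisfy the commutator identity (1/2i)(B²P − P*B²) = ±(G₁*G₁ + G₂*G₂) + E + F and the factorization B² = G₂H + J. Then for any c with 0 < c < 2 and any u for which all pairings are defined, ‖G₁u‖² + (1 − c/2)‖G₂u‖² ≤ (1/(2c))‖HPu‖² + |Im⟨u, JPu⟩| + |⟨u, Eu⟩| + |⟨u, Fu⟩|. -/

import Mathlib

open ContinuousLinearMap

/-- The core a priori inequality of the positive commutator argument: if
`(1/2i)(B²P − P*B²) = ±(G₁*G₁ + G₂*G₂) + E + F` and `B² = G₂H + J` (with `B, G₂`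
self-adjoint), then for any `0 < c < 2` and any `u`,
`‖G₁u‖² + (1 − c/2)‖G₂u‖² ≤ (1/(2c))‖HPu‖² + |Im⟨u, JPu⟩| + |⟨u, Eu⟩| + |⟨u, Fu⟩|`. -/
theorem commutator_inequality {H : Type*} [NormedAddCommGroup H]
    [InnerProductSpace ℂ H] [CompleteSpace H]
    (B P G₁ G₂ E F Hop J : H →L[ℂ] H)
    (σ : ℂ) (hσ : σ = 1 ∨ σ = -1)
    (hB : adjoint B = B) (hG₂ : adjoint G₂ = G₂)
    (hid : (1 / (2 * Complex.I)) • (B ∘L B ∘L P - adjoint P ∘L B ∘L B)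
        = σ • (adjoint G₁ ∘L G₁ + adjoint G₂ ∘L G₂) + E + F)
    (hfact : B ∘L B = G₂ ∘L Hop + J) :
    ∀ c : ℝ, 0 < c → c < 2 → ∀ u : H,
      ‖G₁ u‖ ^ 2 + (1 - c / 2) * ‖G₂ u‖ ^ 2
        ≤ (1 / (2 * c)) * ‖Hop (P u)‖ ^ 2
          + |(inner ℂ u (J (P u)) : ℂ).im|
          + ‖(inner ℂ u (E u) : ℂ)‖
          + ‖(inner ℂ u (F u) : ℂ)‖ := by
  intro c hc hc2 u
  have hBin : ∀ x y : H, (inner ℂ (B x) y : ℂ) = inner ℂ x (B y) := by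
    intro x y
    conv_lhs => rw [← hB]
    exact adjoint_inner_left B y x
  have hG₂in : ∀ x y : H, (inner ℂ (G₂ x) y : ℂ) = inner ℂ x (G₂ y) := by
    intro x y
    conv_lhs => rw [← hG₂]
    exact adjoint_inner_left G₂ y x
  set z : ℂ := inner ℂ u (B (B (P u))) with hzdef
  set e : ℂ := inner ℂ u (E u) with hedef
  set f : ℂ := inner ℂ u (F u) with hfdef
  have hconj : (inner ℂ (P u) (B (B u)) : ℂ) = starRingEnd ℂ z := by
    rw [← hBin, ← hBin, ← inner_conj_symm]
  have hmain := congrArg (fun T : H →L[ℂ] H => (inner ℂ u (T u) : ℂ)) hid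
  simp only [comp_apply, add_apply, smul_apply, sub_apply, inner_add_right,
    inner_smul_right, inner_sub_right, adjoint_inner_right,
    inner_self_eq_norm_sq_to_K] at hmain
  rw [← hzdef, hconj, Complex.sub_conj] at hmain
  have hIm : (z.im : ℂ) = σ * ((‖G₁ u‖ : ℂ) ^ 2 + (‖G₂ u‖ : ℂ) ^ 2) + e + f := by
    have hL : (z.im : ℂ) = 1 / (2 * Complex.I) * (↑(2 * z.im) * Complex.I) := by
      push_cast
      field_simp
    exact hL.trans hmain
  -- split z via the factorization
  have hzsplit : z.im = (inner ℂ (G₂ u) (Hop (P u)) : ℂ).im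
      + (inner ℂ u (J (P u)) : ℂ).im := by
    have happ : B (B (P u)) = G₂ (Hop (P u)) + J (P u) := by
      have := congrArg (fun T : H →L[ℂ] H => T (P u)) hfact
      simpa using this
    rw [hzdef, happ, inner_add_right, ← hG₂in u (Hop (P u))]
    simp
  have h1 : |(inner ℂ (G₂ u) (Hop (P u)) : ℂ).im| ≤ ‖G₂ u‖ * ‖Hop (P u)‖ := by
    refine le_trans (Complex.abs_im_le_norm _) ?_
    exact norm_inner_le_norm _ _
  have haE : |e.re| ≤ ‖e‖ := Complex.abs_re_le_norm e
  have haF : |f.re| ≤ ‖f‖ := Complex.abs_re_le_norm f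
  have hJ : |(inner ℂ (G₂ u) (Hop (P u)) : ℂ).im| + 0 ≤ ‖G₂ u‖ * ‖Hop (P u)‖ := by
    simpa using h1
  have hyoung : ‖G₂ u‖ * ‖Hop (P u)‖ ≤ (c / 2) * ‖G₂ u‖ ^ 2
      + (1 / (2 * c)) * ‖Hop (P u)‖ ^ 2 := by
    have hc' : (0:ℝ) < 2 * c := by linarith
    have hkey : (c / 2) * ‖G₂ u‖ ^ 2 + (1 / (2 * c)) * ‖Hop (P u)‖ ^ 2
        - ‖G₂ u‖ * ‖Hop (P u)‖ = (c * ‖G₂ u‖ - ‖Hop (P u)‖) ^ 2 / (2 * c) := by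
      field_simp
      ring
    have hnn := div_nonneg (sq_nonneg (c * ‖G₂ u‖ - ‖Hop (P u)‖)) (le_of_lt hc')
    linarith [hkey, hnn]
  have habs1 := abs_le.mp h1
  have habsE := abs_le.mp haE
  have habsF := abs_le.mp haF
  have habsJ := le_abs_self ((inner ℂ u (J (P u)) : ℂ).im)
  have habsJ' := neg_abs_le ((inner ℂ u (J (P u)) : ℂ).im)
  rcases hσ with rfl | rfl
  · have hre := congrArg Complex.re hIm
    simp [Complex.add_re, Complex.mul_re, ← Complex.ofReal_pow] at hre
    linarith [habs1.2, habsE.1, habsF.1, habsJ, hyoung, hzsplit, hre]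
  · have hre := congrArg Complex.re hIm
    simp [Complex.add_re, Complex.mul_re, ← Complex.ofReal_pow] at hre
    linarith [habs1.1, habsE.2, habsF.2, habsJ', hyoung, hzsplit, hre]
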